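/- (Validity of the partition-based Lagrangian cut, Proposition 1.) Let X ⊆ ℝ^{n₁}, π ∈ ℝ^{n₁}, π₀ ≥ 0, and let K^P = {(x', y) : x' ∈ X, y ≥ 0, T̄ x' + W y ≥ h̄}. Let L ∈ ℝ satisfy π ⬝ x' + π₀ (d ⬝ y) ≥ L for every (x', y) ∈ K^P. Suppose x ∈ X and that for each s ∈ P the set F_s(x) = {y ∈ ℝ^{n₂} : y ≥ 0, T^s x + W y ≥ h^s} is nonempty with {d ⬝ y : y ∈ F_s(x)} bounded below, and let Q_s(x) = sInf {d ⬝ y : y ∈ F_s(x)}. Then for any θ : P → ℝ with θ_s ≥ Q_s(x) for all s ∈ P, setting θ^P = (Σ_{s∈P} p_s θ_s)/p_P, one has π ⬝ x + π₀ θ^P ≥ L. -/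

import Mathlib

open Matrix Finset

lemma aux_sum_mulVec {m n ι : Type*} [Fintype n] (P : Finset ι)
    (A : ι → Matrix m n ℝ) (x : n → ℝ) :
    (∑ s ∈ P, A s) *ᵥ x = ∑ s ∈ P, A s *ᵥ x := by
  ext i
  simp only [Matrix.mulVec, dotProduct, Matrix.sum_apply, Finset.sum_apply,
    Finset.sum_mul]
  rw [Finset.sum_comm]

lemma aux_mulVec_sum {m n ι : Type*} [Fintype n] (P : Finset ι)
    (W : Matrix m n ℝ) (v : ι → n → ℝ) :
    W *ᵥ (∑ s ∈ P, v s) = ∑ s ∈ P, W *ᵥ v s := by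
  ext i
  simp only [Matrix.mulVec, dotProduct, Finset.sum_apply, Finset.mul_sum]
  rw [Finset.sum_comm]

lemma aux_dot_sum {n ι : Type*} [Fintype n] (P : Finset ι) (d : n → ℝ) (v : ι → n → ℝ) :
    d ⬝ᵥ (∑ s ∈ P, v s) = ∑ s ∈ P, d ⬝ᵥ v s := by
  simp only [dotProduct, Finset.sum_apply, Finset.mul_sum]
  rw [Finset.sum_comm]

/-- Proposition 1: validity of the partition-based Lagrangian cut. -/
theorem partition_lagrangian_cut_valid {n₁ n₂ m : ℕ} {ι : Type*} (P : Finset ι)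
    (hP : P.Nonempty) (p : ι → ℝ) (hp : ∀ s ∈ P, 0 < p s)
    (W : Matrix (Fin m) (Fin n₂) ℝ) (d : Fin n₂ → ℝ)
    (T : ι → Matrix (Fin m) (Fin n₁) ℝ) (h : ι → Fin m → ℝ)
    (X : Set (Fin n₁ → ℝ)) (π : Fin n₁ → ℝ) (π₀ : ℝ) (hπ₀ : 0 ≤ π₀) (L : ℝ)
    (hL : ∀ x' : Fin n₁ → ℝ, ∀ y : Fin n₂ → ℝ, x' ∈ X → 0 ≤ y →
      ((∑ s ∈ P, p s)⁻¹ • ∑ s ∈ P, p s • h s) ≤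
        ((∑ s ∈ P, p s)⁻¹ • ∑ s ∈ P, p s • T s) *ᵥ x' + W *ᵥ y →
      L ≤ π ⬝ᵥ x' + π₀ * (d ⬝ᵥ y))
    (x : Fin n₁ → ℝ) (hx : x ∈ X)
    (hne : ∀ s ∈ P, {y : Fin n₂ → ℝ | 0 ≤ y ∧ h s ≤ T s *ᵥ x + W *ᵥ y}.Nonempty)
    (hbdd : ∀ s ∈ P,
      BddBelow ((fun y => d ⬝ᵥ y) '' {y : Fin n₂ → ℝ | 0 ≤ y ∧ h s ≤ T s *ᵥ x + W *ᵥ y}))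
    (θ : ι → ℝ)
    (hθ : ∀ s ∈ P,
      sInf ((fun y => d ⬝ᵥ y) '' {y : Fin n₂ → ℝ | 0 ≤ y ∧ h s ≤ T s *ᵥ x + W *ᵥ y}) ≤ θ s) :
    L ≤ π ⬝ᵥ x + π₀ * ((∑ s ∈ P, p s * θ s) / (∑ s ∈ P, p s)) := by
  have hPsum : 0 < ∑ s ∈ P, p s := Finset.sum_pos hp hP
  set c : ℝ := (∑ s ∈ P, p s)⁻¹ with hc
  have hcpos : 0 < c := inv_pos.2 hPsum
  refine le_of_forall_pos_le_add (fun δ hδ => ?_)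
  set ε : ℝ := δ / (π₀ + 1) with hεdef
  have hεpos : 0 < ε := div_pos hδ (by linarith)
  have hchoice : ∀ s, s ∈ P → ∃ y : Fin n₂ → ℝ,
      (0 ≤ y ∧ h s ≤ T s *ᵥ x + W *ᵥ y) ∧ d ⬝ᵥ y ≤ θ s + ε := by
    intro s hs
    have hlt : sInf ((fun y => d ⬝ᵥ y) '' {y : Fin n₂ → ℝ | 0 ≤ y ∧ h s ≤ T s *ᵥ x + W *ᵥ y})
        < sInf ((fun y => d ⬝ᵥ y) '' {y : Fin n₂ → ℝ | 0 ≤ y ∧ h s ≤ T s *ᵥ x + W *ᵥ y}) + ε :=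
      lt_add_of_pos_right _ hεpos
    obtain ⟨a, ha, halt⟩ := (csInf_lt_iff (hbdd s hs) ((hne s hs).image _)).1 hlt
    obtain ⟨y, hy, rfl⟩ := ha
    exact ⟨y, hy, le_trans halt.le (by linarith [hθ s hs])⟩
  choose! Y hYfeas hYval using hchoice
  set y : Fin n₂ → ℝ := c • ∑ s ∈ P, p s • Y s with hy
  have hy0 : 0 ≤ y := by
    intro j
    simp only [hy, Pi.smul_apply, Finset.sum_apply, smul_eq_mul]
    have : 0 ≤ ∑ s ∈ P, (p s • Y s) j :=
      Finset.sum_nonneg fun s hs => by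
        simpa using mul_nonneg (hp s hs).le ((hYfeas s hs).1 j)
    positivity
  have hWy : W *ᵥ y = c • ∑ s ∈ P, p s • (W *ᵥ Y s) := by
    rw [hy, Matrix.mulVec_smul, aux_mulVec_sum]
    congr 1
    exact Finset.sum_congr rfl fun s _ => Matrix.mulVec_smul W (p s) (Y s)
  have hcon : ((∑ s ∈ P, p s)⁻¹ • ∑ s ∈ P, p s • h s) ≤
      ((∑ s ∈ P, p s)⁻¹ • ∑ s ∈ P, p s • T s) *ᵥ x + W *ᵥ y := by
    rw [Matrix.smul_mulVec, aux_sum_mulVec, hWy, ← smul_add, ← Finset.sum_add_distrib]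
    refine smul_le_smul_of_nonneg_left ?_ hcpos.le
    refine Finset.sum_le_sum fun s hs => ?_
    have h1 : p s • h s ≤ p s • (T s *ᵥ x + W *ᵥ Y s) :=
      smul_le_smul_of_nonneg_left (hYfeas s hs).2 (hp s hs).le
    simpa [Matrix.smul_mulVec, smul_add] using h1
  have hdy : d ⬝ᵥ y ≤ (∑ s ∈ P, p s * θ s) / (∑ s ∈ P, p s) + ε := by
    have h1 : d ⬝ᵥ y = c * ∑ s ∈ P, p s * (d ⬝ᵥ Y s) := by
      rw [hy, dotProduct_smul, aux_dot_sum, smul_eq_mul]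
      congr 1
      refine Finset.sum_congr rfl fun s _ => ?_
      rw [dotProduct_smul, smul_eq_mul]
    have h2 : ∑ s ∈ P, p s * (d ⬝ᵥ Y s) ≤ ∑ s ∈ P, p s * (θ s + ε) :=
      Finset.sum_le_sum fun s hs =>
        mul_le_mul_of_nonneg_left (hYval s hs) (hp s hs).le
    have h3 : c * ∑ s ∈ P, p s * (θ s + ε) = (∑ s ∈ P, p s * θ s) / (∑ s ∈ P, p s) + ε := by
      have he : ∑ s ∈ P, p s * (θ s + ε) = (∑ s ∈ P, p s * θ s) + (∑ s ∈ P, p s) * ε := by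
        rw [Finset.sum_mul, ← Finset.sum_add_distrib]
        exact Finset.sum_congr rfl fun s _ => by ring
      rw [he, hc, div_eq_inv_mul]
      field_simp
    rw [h1, ← h3]
    exact mul_le_mul_of_nonneg_left h2 hcpos.le
  have hmain := hL x y hx hy0 hcon
  have hεbound : π₀ * ε ≤ δ := by
    rw [hεdef, div_eq_inv_mul]
    have hπ1 : 0 < π₀ + 1 := by linarith
    have h1 : (π₀ + 1)⁻¹ * π₀ ≤ 1 := by
      rw [inv_mul_le_iff₀ hπ1]; linarith
    nlinarith
  nlinarith [mul_le_mul_of_nonneg_left hdy hπ₀]
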